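/- In the game G₂: (i) every memoryless (positional) leader strategy profile gives the leader expected reward at most 1, and this bound is attained; (ii) there is a leader strategy profile with memory bound 3 (in which player 1 moves immediately to vertex 2 and the leader loops at vertex 2 exactly twice before moving to vertex 3) whose leader expected reward is 3/2; (iii) 3/2 is the maximum of the leader's expected reward over all leader strategy profiles of G₂. In particular, bounded-memory leader strategy profiles can be strictly better for the leader than memoryless ones. -/

import Mathlib

open scoped BigOperators

/-- A multi-player discounted sum game (MDSG) on sets of players `P`,
vertices `V` and actions `A`, all required to be finite (`A` nonempty).
The `owner` of a vertex chooses the action there; `tr` is the transition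
function, `rew p v a` is the reward of player `p` for taking action `a`
at vertex `v`, `init` is the initial probability distribution on the
vertices, and `disc` is the discount factor. -/
structure MDSG (P V A : Type) : Type where
  fin_P : Finite P
  fin_V : Finite V
  fin_A : Finite A
  nonempty_A : Nonempty A
  owner : V → P
  tr : V → A → V
  rew : P → V → A → ℝ
  init : V → ℝ
  init_nonneg : ∀ v, 0 ≤ init v
  init_sum : ∑' v, init v = 1
  disc : ℝ
  disc_pos : 0 < disc
  disc_lt_one : disc < 1

/-- A pure strategy profile: given the history (the list of vertex/action pairs
seen so far) and the current vertex, the owner of the current vertex chooses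
an action.  The strategy of an individual player `p` is the restriction of the
profile to the vertices owned by `p`. -/
abbrev Profile (V A : Type) : Type := List (V × A) → V → A

namespace MDSG

variable {P V A : Type}

/-- The pair (history, current vertex) after `n` steps of the play of `σ` from `v`. -/
def histState (G : MDSG P V A) (σ : Profile V A) (v : V) : ℕ → List (V × A) × V
  | 0 => ([], v)
  | n + 1 =>
    let s := G.histState σ v n
    (s.1 ++ [(s.2, σ s.1 s.2)], G.tr s.2 (σ s.1 s.2))

/-- The vertex visited at step `n` of the play of `σ` from `v`. -/
def playV (G : MDSG P V A) (σ : Profile V A) (v : V) (n : ℕ) : V :=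
  (G.histState σ v n).2

/-- The action taken at step `n` of the play of `σ` from `v`. -/
def playA (G : MDSG P V A) (σ : Profile V A) (v : V) (n : ℕ) : A :=
  σ (G.histState σ v n).1 (G.playV σ v n)

/-- The discounted reward of player `p` on the play of `σ` from `v`. -/
noncomputable def reward (G : MDSG P V A) (p : P) (σ : Profile V A) (v : V) : ℝ :=
  ∑' i : ℕ, G.rew p (G.playV σ v i) (G.playA σ v i) * G.disc ^ i

/-- The expected reward of player `p` under the strategy profile `σ`. -/
noncomputable def ER (G : MDSG P V A) (p : P) (σ : Profile V A) : ℝ :=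
  ∑' v : V, G.init v * G.reward p σ v

/-- `σ'` differs from `σ` at most in the strategy of player `p`. -/
def DiffOnly (G : MDSG P V A) (σ σ' : Profile V A) (p : P) : Prop :=
  ∀ h v, G.owner v ≠ p → σ' h v = σ h v

/-- Nash equilibrium: no player can profit from a unilateral deviation. -/
def IsNash (G : MDSG P V A) (σ : Profile V A) : Prop :=
  ∀ p σ', G.DiffOnly σ σ' p → G.ER p σ' ≤ G.ER p σ

/-- Leader strategy profile: no player other than the leader `l` can profit
from a unilateral deviation. -/
def IsLeaderSP (G : MDSG P V A) (l : P) (σ : Profile V A) : Prop :=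
  ∀ p, p ≠ l → ∀ σ', G.DiffOnly σ σ' p → G.ER p σ' ≤ G.ER p σ

/-- `σ` is a (pure) strategy profile with memory bound `b`: there is a memory
set `M` with `|M| ≤ b`, an initial memory state, a memory update function and
a usage function producing all the actions of `σ`. -/
def MemBound (G : MDSG P V A) (σ : Profile V A) (b : ℕ) : Prop :=
  ∃ n : ℕ, n ≤ b ∧ ∃ (m₀ : Fin n) (μ : Fin n → V × A → Fin n) (u : Fin n → V → A),
    ∀ h v, σ h v = u (h.foldl μ m₀) v

/-- `σ` is memoryless (positional): actions depend only on the current vertex. -/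
def Positional (G : MDSG P V A) (σ : Profile V A) : Prop :=
  ∀ h h' v, σ h v = σ h' v

open Classical in
/-- Combination of a strategy for player `p` with a joint strategy of the other players. -/
noncomputable def combine (G : MDSG P V A) (p : P) (τp τo : Profile V A) : Profile V A :=
  fun h v => if G.owner v = p then τp h v else τo h v

/-- The lower value of player `p` at vertex `v`: the supremum over the pure
strategies of `p` of the infimum over the joint pure strategies of the other
players of the reward of `p` on the resulting play from `v`. -/
noncomputable def lowerValue (G : MDSG P V A) (p : P) (v : V) : ℝ :=
  ⨆ τp : Profile V A, ⨅ τo : Profile V A, G.reward p (G.combine p τp τo) v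

/-- The upper value of player `p` at vertex `v`. -/
noncomputable def upperValue (G : MDSG P V A) (p : P) (v : V) : ℝ :=
  ⨅ τo : Profile V A, ⨆ τp : Profile V A, G.reward p (G.combine p τp τo) v

/-- The history `h` contains a deviation from `σ` at position `i`. -/
def DeviatesAt (G : MDSG P V A) (σ : Profile V A) (h : List (V × A)) (i : ℕ) : Prop :=
  ∃ hi : i < h.length, (h.get ⟨i, hi⟩).2 ≠ σ (h.take i) (h.get ⟨i, hi⟩).1

/-- Reward-and-punish profile: on every history that deviates from the
prescribed actions, every action depends only on the current vertex and on the
identity of the first player who deviated (all players follow a fixed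
positional strategy depending only on the first deviator). -/
def IsRewardPunish (G : MDSG P V A) (σ : Profile V A) : Prop :=
  ∃ punish : P → V → A, ∀ (h : List (V × A)) (i : ℕ) (hi : i < h.length),
    G.DeviatesAt σ h i → (∀ j, j < i → ¬ G.DeviatesAt σ h j) →
    ∀ v, σ h v = punish (G.owner (h.get ⟨i, hi⟩).1) v

/-- The outcome plays of `σ` are generated with compliance memory bound `b`:
on every history on which all players have complied, the actions of `σ` are
produced by a memory structure with at most `b` states. -/
def ComplianceMemBound (G : MDSG P V A) (σ : Profile V A) (b : ℕ) : Prop :=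
  ∃ n : ℕ, n ≤ b ∧ ∃ (m₀ : Fin n) (μ : Fin n → V × A → Fin n) (u : Fin n → V → A),
    ∀ h : List (V × A), (∀ i, ¬ G.DeviatesAt σ h i) →
      ∀ v, σ h v = u (h.foldl μ m₀) v

/-- The set of stationary mixed decision vectors: an assignment of a
probability distribution over the actions to every vertex. -/
def simplexD (V A : Type) : Set (V → A → ℝ) :=
  {d | ∀ v, (∀ a, 0 ≤ d v a) ∧ ∑' a, d v a = 1}

end MDSG
namespace MDSG

/-- The game `G₂` (Figure 3 of the paper): three players `0, 1, 2`
(representing players 1, 2, 3, where player `1` — i.e. player 2 — is the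
leader), three vertices `0, 1, 2` (representing vertices 1, 2, 3, vertex `i`
owned by player `i`), actions `Bool` (`true` = "go", `false` = "stay").
Vertex `0`: "stay" loops at `0` with rewards `(0,0,0)`, "go" moves to `1`
with rewards `(0,0,0)`.  Vertex `1`: "stay" loops at `1` with rewards
`(1,1,-2)`, "go" moves to `2` with rewards `(-3,3,0)`.  Vertex `2`: both
actions loop at `2` with rewards `(-3,3,0)`.  The initial distribution is the
point mass at vertex `0`, and the discount factor is `1/2`. -/
noncomputable def G2 : MDSG (Fin 3) (Fin 3) Bool where
  fin_P := inferInstance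
  fin_V := inferInstance
  fin_A := inferInstance
  nonempty_A := inferInstance
  owner := fun v => v
  tr := fun v a =>
    if v = 0 then (if a then 1 else 0)
    else if v = 1 then (if a then 2 else 1)
    else 2
  rew := fun p v a =>
    if v = 0 then 0
    else if v = 1 then
      (if a then (if p = 0 then -3 else if p = 1 then 3 else 0)
       else (if p = 0 then 1 else if p = 1 then 1 else -2))
    else (if p = 0 then -3 else if p = 1 then 3 else 0)
  init := fun v => if v = 0 then 1 else 0
  init_nonneg := by intro v; (try dsimp only); split <;> norm_num
  init_sum := by simpa using tsum_ite_eq (0 : Fin 3) (1 : ℝ)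
  disc := 1 / 2
  disc_pos := by norm_num
  disc_lt_one := by norm_num

end MDSG
namespace G2Aux
open MDSG

/-! ### Basic reductions for `G2` -/

lemma playV_zero (σ : Profile (Fin 3) Bool) (v : Fin 3) : G2.playV σ v 0 = v := rfl

lemma playV_succ (σ : Profile (Fin 3) Bool) (v : Fin 3) (n : ℕ) :
    G2.playV σ v (n+1) = G2.tr (G2.playV σ v n) (G2.playA σ v n) := rfl

lemma hist_succ (σ : Profile (Fin 3) Bool) (v : Fin 3) (n : ℕ) :
    (G2.histState σ v (n+1)).1
      = (G2.histState σ v n).1 ++ [(G2.playV σ v n, G2.playA σ v n)] := rfl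

lemma playA_def (σ : Profile (Fin 3) Bool) (v : Fin 3) (n : ℕ) :
    G2.playA σ v n = σ (G2.histState σ v n).1 (G2.playV σ v n) := rfl

lemma rew_v0 (p : Fin 3) (a : Bool) : G2.rew p 0 a = 0 := rfl
lemma rew_v2 (p : Fin 3) (a : Bool) : G2.rew p 2 a = G2.rew p 2 true := rfl

lemma reward_eq_tsum (p : Fin 3) (σ : Profile (Fin 3) Bool) (v : Fin 3) :
    G2.reward p σ v = ∑' i : ℕ, G2.rew p (G2.playV σ v i) (G2.playA σ v i) * (1/2 : ℝ)^i := rfl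

lemma ER_eq (p : Fin 3) (σ : Profile (Fin 3) Bool) : G2.ER p σ = G2.reward p σ 0 := by
  have h : G2.ER p σ = ∑' v : Fin 3, G2.init v * G2.reward p σ v := rfl
  rw [h, tsum_fintype, Fin.sum_univ_three]
  have h0 : G2.init 0 = 1 := rfl
  have h1 : G2.init 1 = 0 := rfl
  have h2 : G2.init 2 = 0 := rfl
  rw [h0, h1, h2]; ring

/-! ### Summability and geometric computations -/

lemma summable_aux (c : ℕ → ℝ) (C : ℝ) (hC : ∀ i, |c i| ≤ C) :
    Summable (fun i => c i * (1/2:ℝ)^i) := by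
  apply Summable.of_norm_bounded (g := fun i => C * (1/2)^i)
    ((summable_geometric_of_lt_one (by norm_num) (by norm_num)).mul_left C)
  intro i
  rw [norm_mul, norm_pow, Real.norm_eq_abs, Real.norm_eq_abs]
  have h2 : |(1:ℝ)/2| = 1/2 := by norm_num
  rw [h2]
  have h3 : (0:ℝ) ≤ (1/2:ℝ)^i := by positivity
  nlinarith [hC i, abs_nonneg (c i)]

lemma tsum_geo : ∑' i : ℕ, ((1:ℝ)/2)^i = 2 := by
  rw [tsum_geometric_of_lt_one (by norm_num) (by norm_num)]; norm_num

lemma tsum4 (c : ℕ → ℝ) (k : ℕ) (a b d e : ℝ)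
    (h0 : ∀ i, i ≤ k → c i = 0) (h1 : c (k+1) = a) (h2 : c (k+2) = b)
    (h3 : c (k+3) = d) (h4 : ∀ i, c (k+4+i) = e) :
    ∑' i : ℕ, c i * (1/2:ℝ)^i = (1/2)^k * (a/2 + b/4 + d/8 + e/8) := by
  have hC : ∀ i, |c i| ≤ |a| + |b| + |d| + |e| := by
    intro i
    have hna := abs_nonneg a; have hnb := abs_nonneg b
    have hnd := abs_nonneg d; have hne := abs_nonneg e
    rcases le_or_gt i (k+3) with h | h
    · have h5 : i ≤ k ∨ i = k+1 ∨ i = k+2 ∨ i = k+3 := by omega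
      rcases h5 with h5 | h5 | h5 | h5
      · rw [h0 i h5]; simp only [abs_zero]; linarith
      · rw [h5, h1]; linarith
      · rw [h5, h2]; linarith
      · rw [h5, h3]; linarith
    · obtain ⟨j, hj⟩ : ∃ j, i = k+4+j := ⟨i - (k+4), by omega⟩
      rw [hj, h4]; linarith
  have hsum : Summable (fun i => c i * (1/2:ℝ)^i) := summable_aux c _ hC
  have hsumg : Summable (fun i => c (i + (k+1)) * (1/2:ℝ)^(i + (k+1))) := by
    have hfe : (fun i => c (i + (k+1)) * (1/2:ℝ)^(i + (k+1)))
        = fun i => (c (i + (k+1)) * (1/2:ℝ)^(k+1)) * (1/2:ℝ)^i := by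
      funext i; rw [pow_add]; ring
    rw [hfe]
    apply summable_aux _ ((|a| + |b| + |d| + |e|) * (1/2:ℝ)^(k+1))
    intro i
    rw [abs_mul]
    have h9 : |(1/2:ℝ)^(k+1)| = (1/2:ℝ)^(k+1) := abs_of_nonneg (by positivity)
    rw [h9]
    have h8 : (0:ℝ) ≤ (1/2:ℝ)^(k+1) := by positivity
    exact mul_le_mul_of_nonneg_right (hC _) h8
  have hsplit1 := Summable.sum_add_tsum_nat_add (f := fun i => c i * (1/2:ℝ)^i) (k+1) hsum
  have hsplit2 := Summable.sum_add_tsum_nat_add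
    (f := fun i => c (i + (k+1)) * (1/2:ℝ)^(i + (k+1))) 3 hsumg
  have hfront : (∑ i ∈ Finset.range (k+1), c i * (1/2:ℝ)^i) = 0 :=
    Finset.sum_eq_zero fun i hi => by
      rw [h0 i (by have := Finset.mem_range.mp hi; omega)]; ring
  have hmid : (∑ i ∈ Finset.range 3, c (i + (k+1)) * (1/2:ℝ)^(i + (k+1)))
      = a * (1/2:ℝ)^(k+1) + b * (1/2:ℝ)^(k+2) + d * (1/2:ℝ)^(k+3) := by
    rw [Finset.sum_range_succ, Finset.sum_range_succ, Finset.sum_range_one]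
    rw [show 0 + (k+1) = k+1 by omega, show 1 + (k+1) = k+2 by omega,
        show 2 + (k+1) = k+3 by omega, h1, h2, h3]
  have htail : (∑' i : ℕ, c (i + 3 + (k+1)) * (1/2:ℝ)^(i + 3 + (k+1)))
      = e * (1/2:ℝ)^(k+4) * 2 := by
    have hpt : ∀ i : ℕ, c (i + 3 + (k+1)) * (1/2:ℝ)^(i + 3 + (k+1))
        = (e * (1/2:ℝ)^(k+4)) * (1/2:ℝ)^i := by
      intro i
      rw [show i + 3 + (k+1) = k+4+i by omega, h4, pow_add]
      ring
    rw [tsum_congr hpt, tsum_mul_left, tsum_geo]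
    try ring
  rw [hfront, ← hsplit2, hmid, htail] at hsplit1
  rw [← hsplit1]
  ring

/-! ### The all-zero play -/

lemma reward_of_allzero (σ : Profile (Fin 3) Bool) (p : Fin 3)
    (hz : ∀ n, G2.playV σ 0 n = 0) : G2.reward p σ 0 = 0 := by
  rw [reward_eq_tsum]
  have hpt : ∀ i : ℕ, G2.rew p (G2.playV σ 0 i) (G2.playA σ 0 i) * (1/2:ℝ)^i = 0 := by
    intro i; rw [hz i, rew_v0]; ring
  rw [tsum_congr hpt, tsum_zero]

lemma allzero_of_stay (σ : Profile (Fin 3) Bool) (h : ∀ h, σ h 0 = false) :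
    ∀ n, G2.playV σ 0 n = 0 := by
  intro n
  induction n with
  | zero => rfl
  | succ m ih =>
    rw [playV_succ]
    have ha : G2.playA σ 0 m = false := by rw [playA_def, ih, h]
    rw [ih, ha]
    try rfl

/-- Player 0 can always deviate to staying at vertex 0 forever, securing 0;
hence in a leader strategy profile player 0's reward is nonnegative. -/
lemma reward0_nonneg (σ : Profile (Fin 3) Bool) (h : G2.IsLeaderSP 1 σ) :
    0 ≤ G2.reward 0 σ 0 := by
  classical
  set σ' : Profile (Fin 3) Bool := fun h v => if v = 0 then false else σ h v with hσ'
  have hdiff : G2.DiffOnly σ σ' 0 := by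
    intro h v hv
    have hv0 : v ≠ 0 := by
      intro hc; apply hv; rw [hc]; rfl
    simp only [hσ', if_neg hv0]
  have hz : ∀ n, G2.playV σ' 0 n = 0 :=
    allzero_of_stay σ' (fun h => by simp [hσ'])
  have h0 := h 0 (by decide) σ' hdiff
  rw [ER_eq, ER_eq, reward_of_allzero σ' 0 hz] at h0
  exact h0

/-! ### The bounded-memory leader strategy `sstar` -/

/-- Memory update: count visits to vertex 1, capped at 2. -/
def mu : Fin 3 → Fin 3 × Bool → Fin 3 :=
  fun m p => if p.1 = 1 then (if m = 0 then 1 else 2) else m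

/-- Usage function: go at vertex 0; at vertex 1 stay until the memory reaches 2. -/
def uf : Fin 3 → Fin 3 → Bool :=
  fun m v => if v = 1 then decide (m = 2) else true

/-- The leader strategy profile with 3 memory states. -/
def sstar : Profile (Fin 3) Bool := fun h v => uf (h.foldl mu 0) v

lemma M_succ (σ : Profile (Fin 3) Bool) (n : ℕ) :
    (G2.histState σ 0 (n+1)).1.foldl mu 0
      = mu ((G2.histState σ 0 n).1.foldl mu 0) (G2.playV σ 0 n, G2.playA σ 0 n) := by
  rw [hist_succ]
  rw [List.foldl_append]
  rfl

lemma reach (σ : Profile (Fin 3) Bool) (h1 : ∀ h, σ h 1 = sstar h 1) (k : ℕ)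
    (hz : ∀ n, n ≤ k → G2.playV σ 0 n = 0) (hk : G2.playV σ 0 (k+1) = 1) :
    G2.playV σ 0 (k+2) = 1 ∧ G2.playV σ 0 (k+3) = 1 ∧
    (∀ n, k+4 ≤ n → G2.playV σ 0 n = 2) ∧
    G2.playA σ 0 (k+1) = false ∧ G2.playA σ 0 (k+2) = false ∧ G2.playA σ 0 (k+3) = true := by
  have hM0 : ∀ n, n ≤ k+1 → (G2.histState σ 0 n).1.foldl mu 0 = 0 := by
    intro n hn
    induction n with
    | zero => rfl
    | succ m ih =>
      rw [M_succ, hz m (by omega), ih (by omega)]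
      rfl
  have hA1 : G2.playA σ 0 (k+1) = false := by
    rw [playA_def, hk, h1]
    show uf ((G2.histState σ 0 (k + 1)).1.foldl mu 0) 1 = false
    rw [hM0 (k+1) le_rfl]
    rfl
  have hV2 : G2.playV σ 0 (k+2) = 1 := by
    rw [playV_succ, hk, hA1]; rfl
  have hM2 : (G2.histState σ 0 (k+2)).1.foldl mu 0 = 1 := by
    rw [M_succ, hM0 (k+1) le_rfl, hk, hA1]; rfl
  have hA2 : G2.playA σ 0 (k+2) = false := by
    rw [playA_def, hV2, h1]
    show uf ((G2.histState σ 0 (k + 2)).1.foldl mu 0) 1 = false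
    rw [hM2]; rfl
  have hV3 : G2.playV σ 0 (k+3) = 1 := by
    rw [show k+3 = (k+2)+1 by omega, playV_succ, hV2, hA2]; rfl
  have hM3 : (G2.histState σ 0 (k+3)).1.foldl mu 0 = 2 := by
    rw [show k+3 = (k+2)+1 by omega, M_succ, hM2, hV2, hA2]; rfl
  have hA3 : G2.playA σ 0 (k+3) = true := by
    rw [playA_def, hV3, h1]
    show uf ((G2.histState σ 0 (k + 3)).1.foldl mu 0) 1 = true
    rw [hM3]; rfl
  have hV4 : G2.playV σ 0 (k+4) = 2 := by
    rw [show k+4 = (k+3)+1 by omega, playV_succ, hV3, hA3]; rfl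
  refine ⟨hV2, hV3, ?_, hA1, hA2, hA3⟩
  have h2 : ∀ m, G2.playV σ 0 (k+4+m) = 2 := by
    intro m
    induction m with
    | zero => exact hV4
    | succ j ih =>
      rw [show k+4+(j+1) = (k+4+j)+1 by omega, playV_succ, ih]
      cases G2.playA σ 0 (k+4+j) <;> rfl
  intro n hn
  have : n = k+4+(n-(k+4)) := by omega
  rw [this]; exact h2 _

/-- Reward of every player on a play that complies with `sstar` at vertex 1
and first reaches vertex 1 at step `k+1`. -/
lemma rewstar (σ : Profile (Fin 3) Bool) (h1 : ∀ h, σ h 1 = sstar h 1) (k : ℕ)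
    (hz : ∀ n, n ≤ k → G2.playV σ 0 n = 0) (hk : G2.playV σ 0 (k+1) = 1) (p : Fin 3) :
    G2.reward p σ 0
      = (1/2:ℝ)^k * (if p = 0 then 0 else if p = 1 then 3/2 else -3/2) := by
  obtain ⟨hV2, hV3, htail, hA1, hA2, hA3⟩ := reach σ h1 k hz hk
  rw [reward_eq_tsum, tsum4 _ k (G2.rew p 1 false) (G2.rew p 1 false)
      (G2.rew p 1 true) (G2.rew p 2 true)
      (fun i hi => by rw [hz i hi, rew_v0])
      (by rw [hk, hA1]) (by rw [hV2, hA2]) (by rw [hV3, hA3])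
      (fun i => by rw [htail (k+4+i) (by omega), rew_v2])]
  have hp : p = 0 ∨ p = 1 ∨ p = 2 := by fin_cases p <;> [exact Or.inl rfl; exact Or.inr (Or.inl rfl); exact Or.inr (Or.inr rfl)]
  rcases hp with rfl | rfl | rfl
  · norm_num [show G2.rew 0 1 false = 1 from rfl, show G2.rew 0 1 true = -3 from rfl,
      show G2.rew 0 2 true = -3 from rfl]
  · norm_num [show G2.rew 1 1 false = 1 from rfl, show G2.rew 1 1 true = 3 from rfl,
      show G2.rew 1 2 true = 3 from rfl]
  · rw [if_neg (by decide : ¬(2:Fin 3) = 0), if_neg (by decide : ¬(2:Fin 3) = 1)]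
    norm_num [show G2.rew 2 1 false = -2 from rfl, show G2.rew 2 1 true = 0 from rfl,
      show G2.rew 2 2 true = 0 from rfl]

/-- Any play from vertex 0 either stays at vertex 0 forever, or first leaves
it to vertex 1 at some step `k+1`. -/
lemma reach_or (σ : Profile (Fin 3) Bool) :
    (∀ n, G2.playV σ 0 n = 0) ∨
    ∃ k, (∀ n, n ≤ k → G2.playV σ 0 n = 0) ∧ G2.playV σ 0 (k+1) = 1 := by
  classical
  by_cases h : ∀ n, G2.playV σ 0 n = 0
  · exact Or.inl h
  · right
    push_neg at h
    have hex : ∃ n, G2.playV σ 0 n ≠ 0 := h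
    have hNs := Nat.find_spec hex
    have hmin : ∀ m, m < Nat.find hex → G2.playV σ 0 m = 0 :=
      fun m hm => not_not.mp (Nat.find_min hex hm)
    have hN0 : Nat.find hex ≠ 0 := by
      intro h0; exact hNs (h0 ▸ rfl)
    obtain ⟨k, hkk⟩ : ∃ k, Nat.find hex = k+1 := ⟨Nat.find hex - 1, by omega⟩
    refine ⟨k, fun n hn => hmin n (by omega), ?_⟩
    have h1 : G2.playV σ 0 (k+1) = G2.tr 0 (G2.playA σ 0 k) := by
      rw [playV_succ, hmin k (by omega)]
    cases hA : G2.playA σ 0 k with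
    | false => exact absurd (by rw [hkk, h1, hA]; rfl) hNs
    | true => rw [h1, hA]; rfl

/-- Against any profile complying with `sstar` at vertex 1, player 0 gets at most 0. -/
lemma reward0_le (σ : Profile (Fin 3) Bool) (h1 : ∀ h, σ h 1 = sstar h 1) :
    G2.reward 0 σ 0 ≤ 0 := by
  rcases reach_or σ with h | ⟨k, hz, hk⟩
  · rw [reward_of_allzero σ 0 h]
  · rw [rewstar σ h1 k hz hk 0]
    norm_num
/-! ### Plays that enter vertex 1 and stay there forever -/

lemma pat1V (σ : Profile (Fin 3) Bool) (h0 : ∀ h, σ h 0 = true)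
    (h1 : ∀ h, σ h 1 = false) :
    ∀ n, 1 ≤ n → G2.playV σ 0 n = 1 := by
  intro n hn
  induction n with
  | zero => omega
  | succ m ih =>
    rcases Nat.eq_zero_or_pos m with rfl | hm
    · have hA : G2.playA σ 0 0 = true := by rw [playA_def]; exact h0 _
      rw [playV_succ, playV_zero, hA]; rfl
    · have hV := ih hm
      have hA : G2.playA σ 0 m = false := by rw [playA_def, hV, h1]
      rw [playV_succ, hV, hA]; rfl

lemma pat1R (σ : Profile (Fin 3) Bool) (h0 : ∀ h, σ h 0 = true)
    (h1 : ∀ h, σ h 1 = false) (p : Fin 3) :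
    G2.reward p σ 0 = G2.rew p 1 false := by
  have hV := pat1V σ h0 h1
  have hA : ∀ n, 1 ≤ n → G2.playA σ 0 n = false := by
    intro n hn; rw [playA_def, hV n hn, h1]
  rw [reward_eq_tsum, tsum4 _ 0 (G2.rew p 1 false) (G2.rew p 1 false)
      (G2.rew p 1 false) (G2.rew p 1 false)
      (fun i hi => by rw [Nat.le_zero.mp hi, playV_zero, rew_v0])
      (by rw [hV 1 (by omega), hA 1 (by omega)])
      (by rw [hV 2 (by omega), hA 2 (by omega)])
      (by rw [hV 3 (by omega), hA 3 (by omega)])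
      (fun i => by rw [hV (0+4+i) (by omega), hA (0+4+i) (by omega)])]
  ring

/-! ### The play 0, 1, 2, 2, … (positional, both players going) -/

lemma pat2R (σ : Profile (Fin 3) Bool) (h0 : ∀ h, σ h 0 = true)
    (h1 : ∀ h, σ h 1 = true) :
    G2.reward 0 σ 0 = -3 := by
  have hA0 : G2.playA σ 0 0 = true := by rw [playA_def]; exact h0 _
  have hV1 : G2.playV σ 0 1 = 1 := by rw [playV_succ, playV_zero, hA0]; rfl
  have hA1 : G2.playA σ 0 1 = true := by rw [playA_def, hV1, h1]
  have hV2 : ∀ n, 2 ≤ n → G2.playV σ 0 n = 2 := by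
    intro n hn
    obtain ⟨m, rfl⟩ : ∃ m, n = 2 + m := ⟨n - 2, by omega⟩
    induction m with
    | zero => rw [playV_succ, hV1, hA1]; rfl
    | succ j ih =>
      rw [show 2+(j+1) = (2+j)+1 by omega, playV_succ, ih (by omega)]
      cases G2.playA σ 0 (2+j) <;> rfl
  rw [reward_eq_tsum, tsum4 _ 0 (-3) (-3) (-3) (-3)
      (fun i hi => by rw [Nat.le_zero.mp hi, playV_zero, rew_v0])
      (by rw [hV1, hA1]; rfl)
      (by rw [hV2 2 le_rfl, rew_v2]; rfl)
      (by rw [hV2 3 (by omega), rew_v2]; rfl)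
      (fun i => by rw [hV2 (0+4+i) (by omega), rew_v2]; rfl)]
  norm_num

/-! ### The general `X - 3Y` / `X + 3Y` decomposition of rewards -/

lemma point01 (σ : Profile (Fin 3) Bool) (i : ℕ) :
    (G2.rew 0 (G2.playV σ 0 i) (G2.playA σ 0 i)
      = (if G2.playV σ 0 i = 1 ∧ G2.playV σ 0 (i+1) = 1 then (1:ℝ) else 0)
        - 3 * (if G2.playV σ 0 i = 2 ∨ (G2.playV σ 0 i = 1 ∧ G2.playV σ 0 (i+1) = 2)
            then (1:ℝ) else 0)) ∧
    (G2.rew 1 (G2.playV σ 0 i) (G2.playA σ 0 i)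
      = (if G2.playV σ 0 i = 1 ∧ G2.playV σ 0 (i+1) = 1 then (1:ℝ) else 0)
        + 3 * (if G2.playV σ 0 i = 2 ∨ (G2.playV σ 0 i = 1 ∧ G2.playV σ 0 (i+1) = 2)
            then (1:ℝ) else 0)) := by
  have hs : G2.playV σ 0 (i+1) = G2.tr (G2.playV σ 0 i) (G2.playA σ 0 i) := rfl
  rw [hs]
  generalize G2.playA σ 0 i = a
  generalize G2.playV σ 0 i = w
  have hw : w = 0 ∨ w = 1 ∨ w = 2 := by
    fin_cases w <;> [exact Or.inl rfl; exact Or.inr (Or.inl rfl); exact Or.inr (Or.inr rfl)]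
  rcases hw with rfl | rfl | rfl <;> cases a <;>
    norm_num [show G2.tr 0 false = 0 from rfl, show G2.tr 0 true = 1 from rfl,
      show G2.tr 1 false = 1 from rfl, show G2.tr 1 true = 2 from rfl,
      show ∀ a, G2.tr 2 a = 2 from fun _ => rfl,
      show ∀ (p : Fin 3) a, G2.rew p 0 a = 0 from fun _ _ => rfl,
      show G2.rew 0 1 false = 1 from rfl, show G2.rew 0 1 true = -3 from rfl,
      show G2.rew 1 1 false = 1 from rfl, show G2.rew 1 1 true = 3 from rfl,
      show ∀ a, G2.rew 0 2 a = -3 from fun a => by cases a <;> rfl,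
      show ∀ a, G2.rew 1 2 a = 3 from fun a => by cases a <;> rfl,
      show ((0:Fin 3) = 1) ↔ False from by decide,
      show ((0:Fin 3) = 2) ↔ False from by decide,
      show ((1:Fin 3) = 1) ↔ True from by decide,
      show ((1:Fin 3) = 2) ↔ False from by decide,
      show ((2:Fin 3) = 1) ↔ False from by decide,
      show ((2:Fin 3) = 2) ↔ True from by decide]
open Classical in
/-- The rewards of players 0 and 1 from vertex 0 have the form `X - 3Y` and
`X + 3Y` with `X, Y ≥ 0` and `X + Y ≤ 1`. -/
lemma xy (σ : Profile (Fin 3) Bool) :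
    ∃ X Y : ℝ, G2.reward 0 σ 0 = X - 3*Y ∧ G2.reward 1 σ 0 = X + 3*Y ∧
      0 ≤ X ∧ 0 ≤ Y ∧ X + Y ≤ 1 := by
  classical
  set s : ℕ → ℝ := fun i =>
    if G2.playV σ 0 i = 1 ∧ G2.playV σ 0 (i+1) = 1 then 1 else 0 with hsdef
  set u : ℕ → ℝ := fun i =>
    if G2.playV σ 0 i = 2 ∨ (G2.playV σ 0 i = 1 ∧ G2.playV σ 0 (i+1) = 2) then 1 else 0
    with hudef
  have hs01 : ∀ i, 0 ≤ s i ∧ s i ≤ 1 := by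
    intro i; rw [hsdef]; dsimp only; split_ifs <;> norm_num
  have hu01 : ∀ i, 0 ≤ u i ∧ u i ≤ 1 := by
    intro i; rw [hudef]; dsimp only; split_ifs <;> norm_num
  have hsum_s : Summable (fun i => s i * (1/2:ℝ)^i) :=
    summable_aux s 1 (fun i => abs_le.mpr ⟨by linarith [(hs01 i).1], (hs01 i).2⟩)
  have hsum_u : Summable (fun i => u i * (1/2:ℝ)^i) :=
    summable_aux u 1 (fun i => abs_le.mpr ⟨by linarith [(hu01 i).1], (hu01 i).2⟩)
  refine ⟨∑' i, s i * (1/2:ℝ)^i, ∑' i, u i * (1/2:ℝ)^i, ?_, ?_, ?_, ?_, ?_⟩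
  · rw [reward_eq_tsum]
    have hpt : ∀ i, G2.rew 0 (G2.playV σ 0 i) (G2.playA σ 0 i) * (1/2:ℝ)^i
        = s i * (1/2:ℝ)^i - 3 * (u i * (1/2:ℝ)^i) := by
      intro i; rw [(point01 σ i).1]; ring
    rw [tsum_congr hpt, Summable.tsum_sub hsum_s (hsum_u.mul_left 3), tsum_mul_left]
  · rw [reward_eq_tsum]
    have hpt : ∀ i, G2.rew 1 (G2.playV σ 0 i) (G2.playA σ 0 i) * (1/2:ℝ)^i
        = s i * (1/2:ℝ)^i + 3 * (u i * (1/2:ℝ)^i) := by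
      intro i; rw [(point01 σ i).2]; ring
    rw [tsum_congr hpt, Summable.tsum_add hsum_s (hsum_u.mul_left 3), tsum_mul_left]
  · exact tsum_nonneg (fun i => mul_nonneg (hs01 i).1 (by positivity))
  · exact tsum_nonneg (fun i => mul_nonneg (hu01 i).1 (by positivity))
  · rw [← Summable.tsum_add hsum_s hsum_u]
    set b : ℕ → ℝ := fun i => (if i = 0 then 0 else 1) * (1/2:ℝ)^i with hbdef
    have hsum_b : Summable b :=
      summable_aux (fun i => if i = 0 then 0 else 1) 1
        (fun i => by by_cases h : i = 0 <;> simp [h])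
    have hb1 : ∑' i, b i = 1 := by
      rw [Summable.tsum_eq_zero_add hsum_b]
      have h0 : b 0 = 0 := by rw [hbdef]; norm_num
      have hpt : ∀ i : ℕ, b (i+1) = (1/2:ℝ) * (1/2:ℝ)^i := by
        intro i; rw [hbdef]; dsimp only
        rw [if_neg (by omega), pow_succ]; ring
      rw [h0, tsum_congr hpt, tsum_mul_left, tsum_geo]; ring
    refine le_trans (Summable.tsum_le_tsum ?_ (hsum_s.add hsum_u) hsum_b) (le_of_eq hb1)
    intro i
    rcases Nat.eq_zero_or_pos i with rfl | hi
    · have hv0 : G2.playV σ 0 0 = 0 := rfl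
      have hs0 : s 0 = 0 := by
        rw [hsdef]; dsimp only; rw [hv0]
        rw [if_neg (fun h => absurd h.1 (by decide))]
      have hu0 : u 0 = 0 := by
        rw [hudef]; dsimp only; rw [hv0]
        refine if_neg (fun h => ?_)
        rcases h with h | h
        · exact absurd h (by decide)
        · exact absurd h.1 (by decide)
      have hb0 : b 0 = 0 := by rw [hbdef]; norm_num
      rw [hs0, hu0, hb0]; norm_num
    · have hb : b i = (1/2:ℝ)^i := by
        rw [hbdef]; dsimp only; rw [if_neg (by omega)]; ring
      have hsu : s i + u i ≤ 1 := by
        rw [hsdef, hudef]; dsimp only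
        by_cases h1 : G2.playV σ 0 i = 1 ∧ G2.playV σ 0 (i+1) = 1
        · rw [if_pos h1]
          rw [if_neg (fun h => ?_)]
          · norm_num
          · rcases h with h | h
            · exact absurd (h1.1.symm.trans h) (by decide)
            · exact absurd (h1.2.symm.trans h.2) (by decide)
        · rw [if_neg h1]; split_ifs <;> norm_num
      calc s i * (1/2:ℝ)^i + u i * (1/2:ℝ)^i = (s i + u i) * (1/2:ℝ)^i := by ring
        _ ≤ 1 * (1/2:ℝ)^i := mul_le_mul_of_nonneg_right hsu (by positivity)
        _ = b i := by rw [hb]; ring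
end G2Aux

open G2Aux

open MDSG in
/-- In the game `G₂` (leader = player `1`, i.e. player 2 of the paper):
(i) every memoryless (positional) leader strategy profile gives the leader
expected reward at most `1`, and this bound is attained;
(ii) there is a leader strategy profile with memory bound `3`, in which
player 1 moves immediately to vertex 2 and the leader loops at vertex 2
exactly twice before moving to vertex 3 (so the visited vertices are
`0, 1, 1, 1, 2, 2, …` in our indexing), whose leader expected reward is `3/2`;
(iii) `3/2` is the maximum of the leader's expected reward over all leader
strategy profiles of `G₂`. -/
theorem bounded_memory_beats_memoryless_in_G2 :
    ((∀ σ : Profile (Fin 3) Bool,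
        G2.Positional σ → G2.IsLeaderSP 1 σ → G2.ER 1 σ ≤ 1) ∧
      (∃ σ : Profile (Fin 3) Bool,
        G2.Positional σ ∧ G2.IsLeaderSP 1 σ ∧ G2.ER 1 σ = 1)) ∧
    (∃ σ : Profile (Fin 3) Bool,
      G2.MemBound σ 3 ∧ G2.IsLeaderSP 1 σ ∧ G2.ER 1 σ = 3 / 2 ∧
      (∀ n : ℕ, G2.playV σ 0 n = if n = 0 then 0 else if n ≤ 3 then 1 else 2)) ∧
    ((∀ σ : Profile (Fin 3) Bool, G2.IsLeaderSP 1 σ → G2.ER 1 σ ≤ 3 / 2) ∧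
      (∃ σ : Profile (Fin 3) Bool, G2.IsLeaderSP 1 σ ∧ G2.ER 1 σ = 3 / 2)) := by
  classical
  -- `p ≠ 1` means `p = 0` or `p = 2`
  have hfin : ∀ p : Fin 3, p ≠ 1 → p = 0 ∨ p = 2 := by
    intro p hp
    have h3 : p = 0 ∨ p = 1 ∨ p = 2 := by
      fin_cases p <;> [exact Or.inl rfl; exact Or.inr (Or.inl rfl); exact Or.inr (Or.inr rfl)]
    rcases h3 with h | h | h
    exacts [Or.inl h, absurd h hp, Or.inr h]
  -- every profile going from vertex 0 reaches vertex 1 at step 1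
  have hreach1 : ∀ σ : Profile (Fin 3) Bool, (∀ h, σ h 0 = true) →
      G2.playV σ 0 1 = 1 := by
    intro σ h0
    have hA : G2.playA σ 0 0 = true := by rw [playA_def]; exact h0 _
    rw [playV_succ, playV_zero, hA]; rfl
  -- Part (iii), upper bound
  have part3 : ∀ σ : Profile (Fin 3) Bool, G2.IsLeaderSP 1 σ → G2.ER 1 σ ≤ 3/2 := by
    intro σ hlsp
    obtain ⟨X, Y, h0, h1, hX, hY, hXY⟩ := xy σ
    have hp0 := reward0_nonneg σ hlsp
    rw [h0] at hp0
    rw [ER_eq, h1]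
    linarith
  -- Part (i), upper bound for positional leader strategy profiles
  have part1a : ∀ σ : Profile (Fin 3) Bool,
      G2.Positional σ → G2.IsLeaderSP 1 σ → G2.ER 1 σ ≤ 1 := by
    intro σ hpos hlsp
    have hσ : ∀ h v, σ h v = σ [] v := fun h v => hpos h [] v
    rw [ER_eq]
    cases hA0 : σ [] 0 with
    | false =>
      rw [reward_of_allzero σ 1 (allzero_of_stay σ (fun h => (hσ h 0).trans hA0))]
      norm_num
    | true =>
      cases hA1 : σ [] 1 with
      | false =>
        rw [pat1R σ (fun h => (hσ h 0).trans hA0) (fun h => (hσ h 1).trans hA1) 1]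
        rw [show G2.rew 1 1 false = (1:ℝ) from rfl]
      | true =>
        exfalso
        have h0 := reward0_nonneg σ hlsp
        rw [pat2R σ (fun h => (hσ h 0).trans hA0) (fun h => (hσ h 1).trans hA1)] at h0
        norm_num at h0
  -- Part (i), the optimal positional leader strategy profile
  set σ1 : Profile (Fin 3) Bool := fun _ v => decide (v = 0) with hσ1def
  have hσ1_0 : ∀ h : List (Fin 3 × Bool), σ1 h 0 = true := fun _ => rfl
  have hσ1_1 : ∀ h : List (Fin 3 × Bool), σ1 h 1 = false := fun _ => rfl
  have hER1 : ∀ p, G2.ER p σ1 = G2.rew p 1 false := fun p => by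
    rw [ER_eq, pat1R σ1 hσ1_0 hσ1_1 p]
  have hlsp1 : G2.IsLeaderSP 1 σ1 := by
    intro p hp σ' hdiff
    rcases hfin p hp with rfl | rfl
    · obtain ⟨X, Y, hX0, _, hXp, hYp, hXY⟩ := xy σ'
      rw [ER_eq, hX0, hER1 0, show G2.rew 0 1 false = (1:ℝ) from rfl]
      linarith
    · have h0' : ∀ h, σ' h 0 = true := fun h =>
        (hdiff h 0 (by decide)).trans (hσ1_0 h)
      have h1' : ∀ h, σ' h 1 = false := fun h =>
        (hdiff h 1 (by decide)).trans (hσ1_1 h)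
      rw [ER_eq, pat1R σ' h0' h1' 2, hER1 2]
  -- Part (ii): facts about `sstar`
  have hstar0 : ∀ h : List (Fin 3 × Bool), sstar h 0 = true := fun _ => rfl
  have hrewstar : ∀ σ : Profile (Fin 3) Bool, (∀ h, σ h 0 = true) →
      (∀ h, σ h 1 = sstar h 1) → ∀ p,
      G2.ER p σ = (if p = 0 then (0:ℝ) else if p = 1 then 3/2 else -3/2) := by
    intro σ h0 h1 p
    rw [ER_eq, rewstar σ h1 0 (fun n hn => by rw [Nat.le_zero.mp hn]; rfl)
      (hreach1 σ h0) p]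
    norm_num
  have hlspstar : G2.IsLeaderSP 1 sstar := by
    intro p hp σ' hdiff
    rcases hfin p hp with rfl | rfl
    · have h1' : ∀ h, σ' h 1 = sstar h 1 := fun h => hdiff h 1 (by decide)
      have hle : G2.reward 0 σ' 0 ≤ 0 := reward0_le σ' h1'
      rw [ER_eq, hrewstar sstar hstar0 (fun h => rfl) 0, if_pos rfl]
      exact hle
    · have h0' : ∀ h, σ' h 0 = true := fun h =>
        (hdiff h 0 (by decide)).trans (hstar0 h)
      have h1' : ∀ h, σ' h 1 = sstar h 1 := fun h => hdiff h 1 (by decide)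
      rw [hrewstar σ' h0' h1' 2, hrewstar sstar hstar0 (fun h => rfl) 2]
  have hERstar : G2.ER 1 sstar = 3/2 := by
    rw [hrewstar sstar hstar0 (fun h => rfl) 1, if_neg (by decide), if_pos rfl]
  have hplay : ∀ n : ℕ,
      G2.playV sstar 0 n = if n = 0 then 0 else if n ≤ 3 then 1 else 2 := by
    have hk : G2.playV sstar 0 1 = 1 := hreach1 sstar hstar0
    obtain ⟨hV2, hV3, htail, -, -, -⟩ := reach sstar (fun h => rfl) 0
      (fun n hn => by rw [Nat.le_zero.mp hn]; rfl) hk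
    intro n
    match n with
    | 0 => rfl
    | 1 => simpa using hk
    | 2 => simpa using hV2
    | 3 => simpa using hV3
    | (m+4) =>
      rw [if_neg (by omega), if_neg (by omega)]
      exact htail _ (by omega)
  refine ⟨⟨part1a, σ1, fun h h' v => rfl, hlsp1, ?_⟩,
    ⟨sstar, ⟨3, le_rfl, 0, mu, uf, fun h v => rfl⟩, hlspstar, hERstar, hplay⟩,
    part3, sstar, hlspstar, hERstar⟩
  rw [hER1 1]; rfl
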